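/- With x = x_*(t) the solution of x'' + x³ = 0, x(0)=1, x'(0)=0, the fundamental matrix of the linearization y'' + 3x² y = 0 with W(0) = id is explicitly W_*(t) = [[x + t x', -x'], [2x' + t x'', -x'']], where all entries are evaluated at t. -/

import Mathlib

open Set

theorem stmt_13 (x : ℝ → ℝ)
    (hx1 : Differentiable ℝ x) (hx2 : Differentiable ℝ (deriv x))
    (heq : ∀ t, deriv (deriv x) t = -(x t) ^ 3)
    (h0 : x 0 = 1) (h0' : deriv x 0 = 0)
    (W : ℝ → Matrix (Fin 2) (Fin 2) ℝ) (hW0 : W 0 = 1)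
    (hW1 : ∀ j t, HasDerivAt (fun s => W s 0 j) (W t 1 j) t)
    (hW2 : ∀ j t, HasDerivAt (fun s => W s 1 j) (-3 * (x t) ^ 2 * W t 0 j) t) :
    ∀ t, W t = !![x t + t * deriv x t, -deriv x t;
                  2 * deriv x t + t * deriv (deriv x) t, -deriv (deriv x) t] := by
  have hX : ∀ t, HasDerivAt x (deriv x t) t := fun t => (hx1 t).hasDerivAt
  have hX' : ∀ t, HasDerivAt (deriv x) (deriv (deriv x) t) t := fun t => (hx2 t).hasDerivAt
  have hx'' : deriv (deriv x) = fun t => -(x t) ^ 3 := funext heq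
  have hX'' : ∀ t, HasDerivAt (deriv (deriv x)) (-3 * x t ^ 2 * deriv x t) t := by
    intro t
    rw [hx'']
    have h := ((hX t).fun_pow 3).fun_neg
    refine h.congr_deriv ?_
    push_cast
    ring
  -- energy conservation : x t ^ 2 ≤ 1
  have hE : ∀ t, (deriv x t) ^ 2 * 2 + (x t) ^ 4 = 1 := by
    intro t
    have hEd : ∀ s : ℝ, HasDerivAt (fun u => (deriv x u) ^ 2 * 2 + (x u) ^ 4) 0 s := by
      intro s
      have h := (((hX' s).fun_pow 2).mul_const 2).fun_add ((hX s).fun_pow 4)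
      refine h.congr_deriv ?_
      rw [heq s]
      push_cast
      ring
    have hconst : ∀ s : ℝ, (deriv x s) ^ 2 * 2 + (x s) ^ 4
        = (deriv x 0) ^ 2 * 2 + (x 0) ^ 4 := by
      intro s
      have := is_const_of_deriv_eq_zero (f := fun u => (deriv x u) ^ 2 * 2 + (x u) ^ 4)
        (fun u => (hEd u).differentiableAt) (fun u => (hEd u).deriv) s 0
      simpa using this
    have := hconst t
    rw [h0, h0'] at this
    simpa using this
  have hx2le : ∀ t, x t ^ 2 ≤ 1 := by
    intro t
    have h := hE t
    nlinarith [sq_nonneg (x t ^ 2 - 1), sq_nonneg (deriv x t)]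
  -- the vector field
  set v : ℝ → ℝ × ℝ → ℝ × ℝ := fun t p => (p.2, -3 * x t ^ 2 * p.1) with hv_def
  have hlip : ∀ t, LipschitzWith 3 (v t) := by
    intro t
    apply LipschitzWith.of_dist_le_mul
    intro p q
    rw [Prod.dist_eq, Prod.dist_eq]
    simp only [hv_def, Real.dist_eq]
    have h1 : |p.2 - q.2| ≤ max |p.1 - q.1| |p.2 - q.2| := le_max_right _ _
    have h2 : |(-3 * x t ^ 2 * p.1) - (-3 * x t ^ 2 * q.1)| ≤ 3 * |p.1 - q.1| := by
      have : (-3 * x t ^ 2 * p.1) - (-3 * x t ^ 2 * q.1) = (-3 * x t ^ 2) * (p.1 - q.1) := by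
        ring
      rw [this, abs_mul]
      have h3 : |(-3 : ℝ) * x t ^ 2| ≤ 3 := by
        rw [abs_of_nonpos (by nlinarith [sq_nonneg (x t)])]
        nlinarith [hx2le t]
      have := abs_nonneg (p.1 - q.1)
      nlinarith
    push_cast
    apply max_le
    · calc |p.2 - q.2| ≤ max |p.1 - q.1| |p.2 - q.2| := h1
        _ ≤ 3 * max |p.1 - q.1| |p.2 - q.2| := by
            nlinarith [le_max_left |p.1 - q.1| |p.2 - q.2|, abs_nonneg (p.1 - q.1),
              abs_nonneg (p.2 - q.2)]
    · calc |(-3 * x t ^ 2 * p.1) - (-3 * x t ^ 2 * q.1)| ≤ 3 * |p.1 - q.1| := h2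
        _ ≤ 3 * max |p.1 - q.1| |p.2 - q.2| := by
            have := le_max_left |p.1 - q.1| |p.2 - q.2|; linarith
  -- the column functions
  have key : ∀ (j : Fin 2) (g : ℝ → ℝ × ℝ),
      (∀ t, HasDerivAt g (v t (g t)) t) → g 0 = (W 0 0 j, W 0 1 j) →
      ∀ t, (W t 0 j, W t 1 j) = g t := by
    intro j g hg hg0 t
    set F : ℝ → ℝ × ℝ := fun s => (W s 0 j, W s 1 j) with hF_def
    have hF : ∀ s, HasDerivAt F (v s (F s)) s := fun s => (hW1 j s).prodMk (hW2 j s)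
    have ht0 : (0 : ℝ) ∈ Ioo (-(|t| + 1)) (|t| + 1) := by
      constructor <;> [nlinarith [abs_nonneg t]; nlinarith [abs_nonneg t]]
    have := ODE_solution_unique_of_mem_Icc (s := fun _ => (univ : Set (ℝ × ℝ)))
      (fun s _ => (hlip s).lipschitzOnWith) ht0
      (fun s _ => (hF s).continuousAt.continuousWithinAt)
      (fun s _ => hF s) (fun _ _ => trivial)
      (fun s _ => (hg s).continuousAt.continuousWithinAt)
      (fun s _ => hg s) (fun _ _ => trivial)
      (hg0.symm)
    exact this ⟨by nlinarith [neg_abs_le t, abs_nonneg t], by nlinarith [le_abs_self t]⟩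
  -- column 0
  have hG0 : ∀ t, (W t 0 0, W t 1 0)
      = (x t + t * deriv x t, 2 * deriv x t + t * deriv (deriv x) t) := by
    apply key 0 (fun s => (x s + s * deriv x s, 2 * deriv x s + s * deriv (deriv x) s))
    · intro t
      apply HasDerivAt.prodMk
      · have h := (hX t).add ((hasDerivAt_id t).mul (hX' t))
        refine h.congr_deriv ?_
        simp [hv_def]
        ring
      · have h := ((hX' t).const_mul 2).add ((hasDerivAt_id t).mul (hX'' t))
        refine h.congr_deriv ?_
        simp only [hv_def, id_eq]
        rw [heq t]
        ring
    · rw [hW0]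
      simp [Matrix.one_apply, h0, h0']
  -- column 1
  have hG1 : ∀ t, (W t 0 1, W t 1 1) = (-deriv x t, -deriv (deriv x) t) := by
    apply key 1 (fun s => (-deriv x s, -deriv (deriv x) s))
    · intro t
      apply HasDerivAt.prodMk
      · exact (hX' t).neg
      · have h := (hX'' t).neg
        refine h.congr_deriv ?_
        simp only [hv_def]
        ring
    · rw [hW0]
      simp [Matrix.one_apply, heq 0, h0, h0']
  intro t
  have h00 := congrArg Prod.fst (hG0 t)
  have h10 := congrArg Prod.snd (hG0 t)
  have h01 := congrArg Prod.fst (hG1 t)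
  have h11 := congrArg Prod.snd (hG1 t)
  simp only at h00 h10 h01 h11
  ext i j
  fin_cases i <;> fin_cases j <;>
    simp [Matrix.cons_val_zero, Matrix.cons_val_one, h00, h10, h01, h11]
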